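/- For every n : ℕ and every k ≤ n, one has in ℚ: (∑ t in Finset.range (n+1), ((k+1 : ℚ)/(k+t+1)) * (n.choose (k+2*t)) * ((k+2*t).choose t))^2 ≤ ∑ t in Finset.range (2*n+1), ((2*n).choose (2*t) * catalan t : ℚ); i.e. the number of left cells with k through strands in Mo_n is at most the square root of |Mo_n| = Motz(2n). -/

import Mathlib

open Finset

namespace MotzAux

noncomputable def bb (k t : ℕ) : ℚ :=
  ((k:ℚ)+1)/((k:ℚ)+(t:ℚ)+1) * ((k+2*t).choose t : ℚ)

lemma bb_zero (k : ℕ) : bb k 0 = 1 := by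
  have h : ((k:ℚ)+1) ≠ 0 := by positivity
  simp [bb, div_self h]

lemma bb_succ_eq (k s : ℕ) :
    bb k (s+1) = ((k+2*(s+1)).choose (s+1) : ℚ) - ((k+2*(s+1)).choose s : ℚ) := by
  have h := Nat.choose_succ_right_eq (k+2*(s+1)) s
  rw [show k+2*(s+1) - s = k+s+2 from by omega] at h
  have h' : ((k+2*(s+1)).choose (s+1) : ℚ) * ((s:ℚ)+1)
      = ((k+2*(s+1)).choose s : ℚ) * ((k:ℚ)+(s:ℚ)+2) := by
    exact_mod_cast h
  have hd : ((k:ℚ)+((s:ℚ)+1)+1) ≠ 0 := by positivity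
  rw [bb]
  push_cast
  rw [div_mul_eq_mul_div, div_eq_iff hd]
  linear_combination -h'

lemma bb_rec0 (s : ℕ) : bb 0 (s+1) = bb 1 s := by
  cases s with
  | zero =>
    rw [bb_succ_eq, bb_zero]
    norm_num
  | succ s =>
    rw [bb_succ_eq, bb_succ_eq]
    have h1 : ((2*s+4).choose (s+2) : ℚ)
        = (2*s+3).choose (s+1) + (2*s+3).choose (s+2) := by
      exact_mod_cast Nat.choose_succ_succ (2*s+3) (s+1)
    have h2 : ((2*s+4).choose (s+1) : ℚ)
        = (2*s+3).choose s + (2*s+3).choose (s+1) := by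
      exact_mod_cast Nat.choose_succ_succ (2*s+3) s
    have hsym : ((2*s+3).choose (s+2) : ℚ) = (2*s+3).choose (s+1) := by
      norm_cast
      rw [show s+2 = (2*s+3) - (s+1) from by omega]
      exact Nat.choose_symm (by omega)
    rw [show 0+2*(s+1+1) = 2*s+4 from by omega,
        show 1+2*(s+1) = 2*s+3 from by omega]
    rw [h1, h2, hsym]
    ring

lemma bb_rec (k s : ℕ) : bb (k+1) (s+1) = bb k (s+1) + bb (k+2) s := by
  cases s with
  | zero =>
    rw [bb_succ_eq, bb_succ_eq, bb_zero]
    norm_num [Nat.choose_one_right]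
    ring
  | succ s =>
    rw [bb_succ_eq, bb_succ_eq, bb_succ_eq]
    have h1 : ((k+2*s+5).choose (s+2) : ℚ)
        = (k+2*s+4).choose (s+1) + (k+2*s+4).choose (s+2) := by
      exact_mod_cast Nat.choose_succ_succ (k+2*s+4) (s+1)
    have h2 : ((k+2*s+5).choose (s+1) : ℚ)
        = (k+2*s+4).choose s + (k+2*s+4).choose (s+1) := by
      exact_mod_cast Nat.choose_succ_succ (k+2*s+4) s
    rw [show k+1+2*(s+1+1) = k+2*s+5 from by omega,
        show k+2*(s+1+1) = k+2*s+4 from by omega,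
        show k+2+2*(s+1) = k+2*s+4 from by omega]
    rw [h1, h2]
    ring

noncomputable def gg (k n : ℕ) : ℚ :=
  ∑ t ∈ range (n+1), ((n.choose (k+2*t)) : ℚ) * bb k t

lemma gg_eq (k n N : ℕ) (h : n + 1 ≤ N) :
    gg k n = ∑ t ∈ range N, ((n.choose (k+2*t)) : ℚ) * bb k t := by
  apply sum_subset (range_subset_range.2 h)
  intro t _ ht
  rw [Nat.choose_eq_zero_of_lt (by simp [mem_range] at ht; omega)]
  simp

lemma gg_vanish (k n : ℕ) (h : n < k) : gg k n = 0 := by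
  apply sum_eq_zero
  intro t _
  rw [Nat.choose_eq_zero_of_lt (by omega)]
  simp

lemma gg_zero_n (k : ℕ) : gg k 0 = if k = 0 then 1 else 0 := by
  cases k with
  | zero => simp [gg, bb_zero]
  | succ k => simp [gg, bb_zero, Nat.choose_eq_zero_of_lt]

lemma gg_zero_succ (n : ℕ) : gg 0 (n+1) = gg 0 n + gg 1 n := by
  have key : ∀ s, (((n+1).choose (0+2*(s+1))) : ℚ) * bb 0 (s+1)
      = ((n.choose (0+2*(s+1))) : ℚ) * bb 0 (s+1) + ((n.choose (1+2*s)) : ℚ) * bb 1 s := by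
    intro s
    have hp : (((n+1).choose (0+2*(s+1))) : ℚ)
        = (n.choose (2*s+1) : ℚ) + (n.choose (0+2*(s+1)) : ℚ) := by
      rw [show 0+2*(s+1) = (2*s+1)+1 from by omega]
      exact_mod_cast Nat.choose_succ_succ n (2*s+1)
    rw [hp, add_mul, show (1:ℕ)+2*s = 2*s+1 from by omega, bb_rec0 s]
    ring
  calc gg 0 (n+1)
      = (∑ s ∈ range (n+1), (((n+1).choose (0+2*(s+1))) : ℚ) * bb 0 (s+1))
        + (((n+1).choose (0+2*0)) : ℚ) * bb 0 0 := sum_range_succ' _ (n+1)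
    _ = (∑ s ∈ range (n+1),
          (((n.choose (0+2*(s+1))) : ℚ) * bb 0 (s+1) + ((n.choose (1+2*s)) : ℚ) * bb 1 s))
        + ((n.choose (0+2*0)) : ℚ) * bb 0 0 := by
        rw [sum_congr rfl fun s _ => key s]; norm_num
    _ = ((∑ s ∈ range (n+1), ((n.choose (0+2*(s+1))) : ℚ) * bb 0 (s+1))
        + ((n.choose (0+2*0)) : ℚ) * bb 0 0)
        + ∑ s ∈ range (n+1), ((n.choose (1+2*s)) : ℚ) * bb 1 s := by
        rw [sum_add_distrib]; ring
    _ = (∑ t ∈ range (n+2), ((n.choose (0+2*t)) : ℚ) * bb 0 t)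
        + ∑ s ∈ range (n+1), ((n.choose (1+2*s)) : ℚ) * bb 1 s := by
        rw [sum_range_succ' (fun t => ((n.choose (0+2*t)) : ℚ) * bb 0 t) (n+1)]
    _ = gg 0 n + gg 1 n := by rw [← gg_eq 0 n (n+2) (by omega)]; rfl

lemma gg_succ (k n : ℕ) : gg (k+1) (n+1) = gg k n + gg (k+1) n + gg (k+2) n := by
  have key : ∀ t, (((n+1).choose (k+1+2*t)) : ℚ) * bb (k+1) t
      = ((n.choose (k+1+2*t)) : ℚ) * bb (k+1) t + ((n.choose (k+2*t)) : ℚ) * bb (k+1) t := by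
    intro t
    have hp : (((n+1).choose (k+1+2*t)) : ℚ)
        = (n.choose (k+2*t) : ℚ) + (n.choose (k+1+2*t) : ℚ) := by
      rw [show k+1+2*t = (k+2*t)+1 from by omega]
      exact_mod_cast Nat.choose_succ_succ n (k+2*t)
    rw [hp]; ring
  have key2 : ∀ s, ((n.choose (k+2*(s+1))) : ℚ) * bb (k+1) (s+1)
      = ((n.choose (k+2*(s+1))) : ℚ) * bb k (s+1) + ((n.choose (k+2+2*s)) : ℚ) * bb (k+2) s := by
    intro s
    rw [bb_rec k s, show k+2+2*s = k+2*(s+1) from by omega]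
    ring
  calc gg (k+1) (n+1)
      = ∑ t ∈ range (n+2), (((n+1).choose (k+1+2*t)) : ℚ) * bb (k+1) t := rfl
    _ = ∑ t ∈ range (n+2),
          (((n.choose (k+1+2*t)) : ℚ) * bb (k+1) t + ((n.choose (k+2*t)) : ℚ) * bb (k+1) t) :=
        sum_congr rfl fun t _ => key t
    _ = (∑ t ∈ range (n+2), ((n.choose (k+1+2*t)) : ℚ) * bb (k+1) t)
        + ∑ t ∈ range (n+2), ((n.choose (k+2*t)) : ℚ) * bb (k+1) t := sum_add_distrib
    _ = gg (k+1) n + ((∑ s ∈ range (n+1), ((n.choose (k+2*(s+1))) : ℚ) * bb (k+1) (s+1))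
        + ((n.choose (k+2*0)) : ℚ) * bb (k+1) 0) := by
        rw [← gg_eq (k+1) n (n+2) (by omega), sum_range_succ']
    _ = gg (k+1) n + ((∑ s ∈ range (n+1),
          (((n.choose (k+2*(s+1))) : ℚ) * bb k (s+1) + ((n.choose (k+2+2*s)) : ℚ) * bb (k+2) s))
        + ((n.choose (k+2*0)) : ℚ) * bb k 0) := by
        rw [sum_congr rfl fun s _ => key2 s, bb_zero, bb_zero]
    _ = gg (k+1) n + (((∑ s ∈ range (n+1), ((n.choose (k+2*(s+1))) : ℚ) * bb k (s+1))
        + ((n.choose (k+2*0)) : ℚ) * bb k 0)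
        + ∑ s ∈ range (n+1), ((n.choose (k+2+2*s)) : ℚ) * bb (k+2) s) := by
        rw [sum_add_distrib]; ring
    _ = gg (k+1) n + ((∑ t ∈ range (n+2), ((n.choose (k+2*t)) : ℚ) * bb k t)
        + gg (k+2) n) := by
        rw [sum_range_succ' (fun t => ((n.choose (k+2*t)) : ℚ) * bb k t) (n+1)]
        rfl
    _ = gg k n + gg (k+1) n + gg (k+2) n := by rw [← gg_eq k n (n+2) (by omega)]; ring

lemma expand (a c M : ℕ) (hM : a ≤ M) :
    ∑ k ∈ range (M+1), gg k a * gg k (c+1)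
      = (∑ k ∈ range (M+1), gg (k+1) a * gg k c)
        + (∑ k ∈ range (M+1), gg k a * gg k c)
        + (∑ k ∈ range (M+1), gg k a * gg (k+1) c) := by
  rw [sum_range_succ' (fun k => gg k a * gg k (c+1)) M]
  have h1 : ∀ j, gg (j+1) a * gg (j+1) (c+1)
      = gg (j+1) a * gg j c + gg (j+1) a * gg (j+1) c + gg (j+1) a * gg (j+2) c := by
    intro j; rw [gg_succ j c]; ring
  rw [sum_congr rfl fun j _ => h1 j, gg_zero_succ c]
  rw [sum_add_distrib, sum_add_distrib]
  rw [sum_range_succ' (fun k => gg k a * gg k c) M,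
      sum_range_succ' (fun k => gg k a * gg (k+1) c) M,
      sum_range_succ (fun k => gg (k+1) a * gg k c) M]
  rw [gg_vanish (M+1) a (by omega)]
  ring

lemma swap (a c M : ℕ) (ha : a ≤ M) (hc : c ≤ M) :
    ∑ k ∈ range (M+1), gg k a * gg k (c+1) = ∑ k ∈ range (M+1), gg k (a+1) * gg k c := by
  rw [expand a c M ha]
  have hcomm : ∑ k ∈ range (M+1), gg k (a+1) * gg k c
      = ∑ k ∈ range (M+1), gg k c * gg k (a+1) :=
    sum_congr rfl fun k _ => mul_comm _ _
  rw [hcomm, expand c a M hc]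
  have e1 : ∑ k ∈ range (M+1), gg (k+1) a * gg k c
      = ∑ k ∈ range (M+1), gg k c * gg (k+1) a :=
    sum_congr rfl fun k _ => mul_comm _ _
  have e2 : ∑ k ∈ range (M+1), gg k a * gg k c
      = ∑ k ∈ range (M+1), gg k c * gg k a :=
    sum_congr rfl fun k _ => mul_comm _ _
  have e3 : ∑ k ∈ range (M+1), gg k a * gg (k+1) c
      = ∑ k ∈ range (M+1), gg (k+1) c * gg k a :=
    sum_congr rfl fun k _ => mul_comm _ _
  rw [e1, e2, e3]
  ring

lemma key : ∀ c a M : ℕ, a + c ≤ M →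
    ∑ k ∈ range (M+1), gg k a * gg k c = gg 0 (a+c) := by
  intro c
  induction c with
  | zero =>
    intro a M h
    have : ∀ k ∈ range (M+1), gg k a * gg k 0 = if k = 0 then gg 0 a else 0 := by
      intro k _
      rw [gg_zero_n]
      rcases Nat.eq_zero_or_pos k with hk | hk
      · subst hk; simp
      · rw [if_neg (by omega), if_neg (by omega), mul_zero]
    rw [sum_congr rfl this, Finset.sum_ite_eq' (range (M+1)) 0 (fun _ => gg 0 a)]
    rw [if_pos (mem_range.2 (by omega)), Nat.add_zero]
  | succ c ih =>
    intro a M h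
    rw [swap a c M (by omega) (by omega), ih (a+1) M (by omega),
      show a+1+c = a+(c+1) from by omega]

lemma bb0_catalan (t : ℕ) : bb 0 t = (catalan t : ℚ) := by
  have h : ((t:ℚ)+1) * catalan t = ((2*t).choose t : ℚ) := by
    have hc := succ_mul_catalan_eq_centralBinom t
    simp only [Nat.centralBinom] at hc
    exact_mod_cast hc
  have hd : ((t:ℚ)+1) ≠ 0 := by positivity
  rw [bb]
  push_cast
  rw [show (0:ℚ)+(t:ℚ)+1 = (t:ℚ)+1 from by ring]
  rw [show (0:ℕ)+2*t = 2*t from by omega]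
  field_simp
  linarith [h]

end MotzAux

open MotzAux Finset in
/-- The number of left cells with k through strands in Mo_n is at most
the square root of |Mo_n| = Motz(2n). -/
theorem cell_size_sq_le_motzkin (n k : ℕ) (hk : k ≤ n) :
    (∑ t ∈ Finset.range (n+1),
        ((k+1 : ℚ)/((k : ℚ)+(t : ℚ)+1)) * (n.choose (k+2*t) : ℚ) *
          ((k+2*t).choose t : ℚ))^2 ≤
      ∑ t ∈ Finset.range (2*n+1), ((2*n).choose (2*t) * catalan t : ℚ) := by
  have hL : (∑ t ∈ Finset.range (n+1),
      ((k+1 : ℚ)/((k : ℚ)+(t : ℚ)+1)) * (n.choose (k+2*t) : ℚ) *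
        ((k+2*t).choose t : ℚ)) = gg k n := by
    apply sum_congr rfl
    intro t _
    rw [bb]
    ring
  have hR : ∑ t ∈ Finset.range (2*n+1), ((2*n).choose (2*t) * catalan t : ℚ)
      = gg 0 (2*n) := by
    rw [gg]
    apply sum_congr rfl
    intro t _
    rw [bb0_catalan, show (0:ℕ)+2*t = 2*t from by omega]
  rw [hL, hR]
  have hkey := key n n (2*n) (by omega)
  rw [show n+n = 2*n from by omega] at hkey
  rw [← hkey, sq]
  exact Finset.single_le_sum (f := fun j => gg j n * gg j n)
    (fun j _ => mul_self_nonneg _) (mem_range.2 (by omega))
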